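/- Rosenthal-type bound: Let ξ_1,…,ξ_n be independent nonnegative random variables and p ≥ 1. Then there is a universal constant C_p (depending only on p) such that E[(Σ_{i=1}^n ξ_i)^p] ≤ C_p · max( (Σ_{i=1}^n E[ξ_i])^p , Σ_{i=1}^n E[ξ_i^p] ). -/

import Mathlib

open MeasureTheory ProbabilityTheory

open Finset in
lemma aux_le_one_add_rpow {p : ℝ} (hp : 1 ≤ p) {x : ℝ} (hx : 0 ≤ x) : x ≤ 1 + x ^ p := by
  rcases le_total x 1 with h | h
  · nlinarith [Real.rpow_nonneg hx p]
  · have h2 : x ≤ x ^ p := by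
      calc x = x ^ (1 : ℝ) := (Real.rpow_one x).symm
        _ ≤ x ^ p := Real.rpow_le_rpow_of_exponent_le h hp
    linarith

lemma aux_rpow_sub_one_le {p : ℝ} (hp : 1 ≤ p) {x : ℝ} (hx : 0 ≤ x) :
    x ^ (p - 1) ≤ 1 + x ^ p := by
  rcases le_total x 1 with h | h
  · have h1 : x ^ (p - 1) ≤ 1 := Real.rpow_le_one hx h (by linarith)
    nlinarith [Real.rpow_nonneg hx p]
  · have h1 : x ^ (p - 1) ≤ x ^ p :=
      Real.rpow_le_rpow_of_exponent_le h (by linarith)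
    linarith

lemma aux_add_rpow_le {q a b : ℝ} (hq : 0 ≤ q) (ha : 0 ≤ a) (hb : 0 ≤ b) :
    (a + b) ^ q ≤ 2 ^ q * (a ^ q + b ^ q) := by
  have h1 : a + b ≤ 2 * max a b := by
    rcases max_cases a b with ⟨h, h'⟩ | ⟨h, h'⟩ <;> nlinarith
  calc (a + b) ^ q ≤ (2 * max a b) ^ q :=
        Real.rpow_le_rpow (by positivity) h1 hq
    _ = 2 ^ q * (max a b) ^ q := Real.mul_rpow (by norm_num) (le_max_of_le_left ha)
    _ ≤ 2 ^ q * (a ^ q + b ^ q) := by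
        have h2 : (max a b) ^ q ≤ a ^ q + b ^ q := by
          rcases max_cases a b with ⟨h, _⟩ | ⟨h, _⟩ <;> rw [h] <;>
            nlinarith [Real.rpow_nonneg ha q, Real.rpow_nonneg hb q]
        have : (0:ℝ) ≤ 2 ^ q := by positivity
        nlinarith

lemma aux_mul_self_rpow {p : ℝ} (hp : 1 ≤ p) {x : ℝ} (hx : 0 ≤ x) :
    x * x ^ (p - 1) = x ^ p := by
  rcases hx.eq_or_lt with h | h
  · rw [← h, Real.zero_rpow (by linarith : p ≠ 0), zero_mul]
  · nth_rewrite 1 [← Real.rpow_one x]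
    rw [← Real.rpow_add h]
    ring_nf

open Finset in
lemma rosenthal_key (p : ℝ) (hp : 1 ≤ p) (Ω : Type) [MeasurableSpace Ω] (μ : Measure Ω)
    [IsProbabilityMeasure μ] (n : ℕ) (ξ : Fin n → Ω → ℝ)
    (hmeas : ∀ i, Measurable (ξ i))
    (hind : iIndepFun ξ μ)
    (hpos : ∀ i ω, 0 ≤ ξ i ω)
    (hint : ∀ i, Integrable (fun ω => ξ i ω ^ p) μ) :
    (∫ ω, (∑ i, ξ i ω) ^ p ∂μ) ≤
      2 ^ (p - 1) * ((∑ i, ∫ ω, ξ i ω ∂μ) * (1 + ∫ ω, (∑ i, ξ i ω) ^ p ∂μ)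
        + ∑ i, ∫ ω, ξ i ω ^ p ∂μ) := by
  have hp0 : (0:ℝ) < p := lt_of_lt_of_le one_pos hp
  have hq0 : (0:ℝ) ≤ p - 1 := by linarith
  set S : Ω → ℝ := fun ω => ∑ i, ξ i ω with hS_def
  have hS_meas : Measurable S := Finset.measurable_sum univ fun i _ => hmeas i
  have hrpow : ∀ q : ℝ, 0 ≤ q → Measurable fun x : ℝ => x ^ q := fun q hq =>
    (Real.continuous_rpow_const hq).measurable
  have hS_nonneg : ∀ ω, 0 ≤ S ω := fun ω => Finset.sum_nonneg fun i _ => hpos i ω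
  -- integrability of S^p
  have hSp_meas : Measurable fun ω => S ω ^ p := (hrpow p hp0.le).comp hS_meas
  have hSp_int : Integrable (fun ω => S ω ^ p) μ := by
    rcases Nat.eq_zero_or_pos n with hn | hn
    · have : (fun ω => S ω ^ p) = fun _ => (0:ℝ) := by
        funext ω
        subst hn
        simp [hS_def, Real.zero_rpow hp0.ne']
      rw [this]; exact integrable_const 0
    · have hbound : ∀ ω, S ω ^ p ≤ ∑ i, (1 / (n:ℝ)) * (((n:ℝ)^p) * ξ i ω ^ p) := by
        intro ω
        have hn0 : (0:ℝ) < n := by exact_mod_cast hn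
        have h := Real.rpow_arith_mean_le_arith_mean_rpow univ
          (fun _ : Fin n => 1 / (n:ℝ)) (fun i => (n:ℝ) * ξ i ω)
          (fun i _ => by positivity)
          (by simp [Finset.sum_const, Finset.card_univ]; field_simp)
          (fun i _ => mul_nonneg (by positivity) (hpos i ω)) hp
        have h1 : (∑ i, (1 / (n:ℝ)) * ((n:ℝ) * ξ i ω)) = S ω := by
          field_simp [hS_def]
          rfl
        rw [h1] at h
        refine h.trans (le_of_eq ?_)
        refine Finset.sum_congr rfl fun i _ => ?_
        rw [Real.mul_rpow (by positivity) (hpos i ω)]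
      refine Integrable.mono' (g := fun ω => ∑ i, (1 / (n:ℝ)) * (((n:ℝ)^p) * ξ i ω ^ p))
        (integrable_finset_sum univ fun i _ => (((hint i).const_mul _).const_mul _))
        hSp_meas.aestronglyMeasurable ?_
      filter_upwards with ω
      rw [Real.norm_of_nonneg (Real.rpow_nonneg (hS_nonneg ω) p)]
      exact hbound ω
  -- integrability of ξ i
  have hξ_int : ∀ i, Integrable (ξ i) μ := by
    intro i
    refine Integrable.mono' (g := fun ω => 1 + ξ i ω ^ p)
      ((integrable_const 1).add (hint i)) (hmeas i).aestronglyMeasurable ?_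
    filter_upwards with ω
    rw [Real.norm_of_nonneg (hpos i ω)]
    exact aux_le_one_add_rpow hp (hpos i ω)
  -- partial sums
  set T : Fin n → Ω → ℝ := fun i ω => ∑ j ∈ univ.erase i, ξ j ω with hT_def
  have hT_meas : ∀ i, Measurable (T i) := fun i =>
    Finset.measurable_sum _ fun j _ => hmeas j
  have hT_nonneg : ∀ i ω, 0 ≤ T i ω := fun i ω =>
    Finset.sum_nonneg fun j _ => hpos j ω
  have hT_le_S : ∀ i ω, T i ω ≤ S ω := fun i ω =>
    Finset.sum_le_sum_of_subset_of_nonneg (Finset.subset_univ _)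
      (fun j _ _ => hpos j ω)
  have hST : ∀ i ω, S ω = T i ω + ξ i ω := fun i ω =>
    (Finset.sum_erase_add univ _ (Finset.mem_univ i)).symm
  have hindep : ∀ i, IndepFun (T i) (ξ i) μ := by
    intro i
    have h := hind.indepFun_finsetSum_of_notMem hmeas (Finset.notMem_erase i univ)
    have : T i = ∑ j ∈ univ.erase i, ξ j := by
      funext ω; simp [hT_def]
    rwa [this]
  -- integrability of T i ^ (p-1)
  have hTq_int : ∀ i, Integrable (fun ω => T i ω ^ (p - 1)) μ := by
    intro i
    refine Integrable.mono' (g := fun ω => 1 + S ω ^ p)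
      ((integrable_const 1).add hSp_int) ((hrpow _ hq0).comp (hT_meas i)).aestronglyMeasurable ?_
    filter_upwards with ω
    rw [Real.norm_of_nonneg (Real.rpow_nonneg (hT_nonneg i ω) _)]
    calc T i ω ^ (p - 1) ≤ 1 + T i ω ^ p := aux_rpow_sub_one_le hp (hT_nonneg i ω)
      _ ≤ 1 + S ω ^ p := by
          have := Real.rpow_le_rpow (hT_nonneg i ω) (hT_le_S i ω) hp0.le
          linarith
  -- independence of ξ i and T i ^ (p-1)
  have hindep' : ∀ i, IndepFun (ξ i) (fun ω => T i ω ^ (p - 1)) μ := fun i =>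
    (hindep i).symm.comp measurable_id (hrpow _ hq0)
  have hmul_int : ∀ i, Integrable (fun ω => ξ i ω * T i ω ^ (p - 1)) μ := fun i =>
    (hindep' i).integrable_mul (hξ_int i) (hTq_int i)
  have hmul_eq : ∀ i, (∫ ω, ξ i ω * T i ω ^ (p - 1) ∂μ)
      = (∫ ω, ξ i ω ∂μ) * ∫ ω, T i ω ^ (p - 1) ∂μ := fun i =>
    (hindep' i).integral_fun_mul_eq_mul_integral (hξ_int i).aestronglyMeasurable
      (hTq_int i).aestronglyMeasurable
  -- pointwise bound
  have hptwise : ∀ i ω, ξ i ω * S ω ^ (p - 1)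
      ≤ 2 ^ (p - 1) * (ξ i ω * T i ω ^ (p - 1) + ξ i ω ^ p) := by
    intro i ω
    have h1 : S ω ^ (p - 1) ≤ 2 ^ (p - 1) * (T i ω ^ (p - 1) + ξ i ω ^ (p - 1)) := by
      rw [hST i ω]
      exact aux_add_rpow_le hq0 (hT_nonneg i ω) (hpos i ω)
    have h2 := mul_le_mul_of_nonneg_left h1 (hpos i ω)
    calc ξ i ω * S ω ^ (p - 1)
        ≤ ξ i ω * (2 ^ (p - 1) * (T i ω ^ (p - 1) + ξ i ω ^ (p - 1))) := h2
      _ = 2 ^ (p - 1) * (ξ i ω * T i ω ^ (p - 1) + ξ i ω * ξ i ω ^ (p - 1)) := by ring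
      _ = 2 ^ (p - 1) * (ξ i ω * T i ω ^ (p - 1) + ξ i ω ^ p) := by
          rw [aux_mul_self_rpow hp (hpos i ω)]
  -- integrability of ξ i * S^(p-1)
  have hξS_int : ∀ i, Integrable (fun ω => ξ i ω * S ω ^ (p - 1)) μ := by
    intro i
    refine Integrable.mono'
      (g := fun ω => 2 ^ (p - 1) * (ξ i ω * T i ω ^ (p - 1) + ξ i ω ^ p))
      (((hmul_int i).add (hint i)).const_mul _)
      ((hmeas i).mul ((hrpow _ hq0).comp hS_meas)).aestronglyMeasurable ?_
    filter_upwards with ω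
    rw [Real.norm_of_nonneg (mul_nonneg (hpos i ω) (Real.rpow_nonneg (hS_nonneg ω) _))]
    exact hptwise i ω
  -- decompose the integral
  have hdecomp : (∫ ω, S ω ^ p ∂μ) = ∑ i, ∫ ω, ξ i ω * S ω ^ (p - 1) ∂μ := by
    rw [← integral_finset_sum univ fun i _ => hξS_int i]
    refine integral_congr_ae (Filter.Eventually.of_forall fun ω => ?_)
    show S ω ^ p = ∑ i, ξ i ω * S ω ^ (p - 1)
    rw [← Finset.sum_mul]
    exact (aux_mul_self_rpow hp (hS_nonneg ω)).symm
  -- bound each term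
  have hterm : ∀ i, (∫ ω, ξ i ω * S ω ^ (p - 1) ∂μ)
      ≤ 2 ^ (p - 1) * ((∫ ω, ξ i ω ∂μ) * (1 + ∫ ω, S ω ^ p ∂μ) + ∫ ω, ξ i ω ^ p ∂μ) := by
    intro i
    have h1 : (∫ ω, ξ i ω * S ω ^ (p - 1) ∂μ)
        ≤ ∫ ω, 2 ^ (p - 1) * (ξ i ω * T i ω ^ (p - 1) + ξ i ω ^ p) ∂μ :=
      integral_mono (hξS_int i) (((hmul_int i).add (hint i)).const_mul _)
        fun ω => hptwise i ω
    have h2 : (∫ ω, 2 ^ (p - 1) * (ξ i ω * T i ω ^ (p - 1) + ξ i ω ^ p) ∂μ)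
        = 2 ^ (p - 1) * ((∫ ω, ξ i ω ∂μ) * (∫ ω, T i ω ^ (p - 1) ∂μ)
            + ∫ ω, ξ i ω ^ p ∂μ) := by
      rw [integral_const_mul, integral_add (hmul_int i) (hint i), hmul_eq i]
    have h3 : (∫ ω, T i ω ^ (p - 1) ∂μ) ≤ 1 + ∫ ω, S ω ^ p ∂μ := by
      have := integral_mono (g := fun ω => 1 + S ω ^ p) (hTq_int i)
        ((integrable_const 1).add hSp_int)
        (fun ω => by
          calc T i ω ^ (p - 1) ≤ 1 + T i ω ^ p := aux_rpow_sub_one_le hp (hT_nonneg i ω)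
            _ ≤ 1 + S ω ^ p := by
                have := Real.rpow_le_rpow (hT_nonneg i ω) (hT_le_S i ω) hp0.le
                linarith)
      rwa [integral_add (integrable_const 1) hSp_int, integral_const, probReal_univ,
        smul_eq_mul, mul_one] at this
    have hξpos : 0 ≤ ∫ ω, ξ i ω ∂μ := integral_nonneg fun ω => hpos i ω
    have h2pos : (0:ℝ) ≤ 2 ^ (p - 1) := by positivity
    calc (∫ ω, ξ i ω * S ω ^ (p - 1) ∂μ)
        ≤ 2 ^ (p - 1) * ((∫ ω, ξ i ω ∂μ) * (∫ ω, T i ω ^ (p - 1) ∂μ)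
            + ∫ ω, ξ i ω ^ p ∂μ) := h1.trans h2.le
      _ ≤ 2 ^ (p - 1) * ((∫ ω, ξ i ω ∂μ) * (1 + ∫ ω, S ω ^ p ∂μ)
            + ∫ ω, ξ i ω ^ p ∂μ) := by
          have := mul_le_mul_of_nonneg_left h3 hξpos
          nlinarith
  calc (∫ ω, S ω ^ p ∂μ) = ∑ i, ∫ ω, ξ i ω * S ω ^ (p - 1) ∂μ := hdecomp
    _ ≤ ∑ i, 2 ^ (p - 1) * ((∫ ω, ξ i ω ∂μ) * (1 + ∫ ω, S ω ^ p ∂μ)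
          + ∫ ω, ξ i ω ^ p ∂μ) := Finset.sum_le_sum fun i _ => hterm i
    _ = 2 ^ (p - 1) * ((∑ i, ∫ ω, ξ i ω ∂μ) * (1 + ∫ ω, S ω ^ p ∂μ)
          + ∑ i, ∫ ω, ξ i ω ^ p ∂μ) := by
        rw [← Finset.mul_sum, Finset.sum_add_distrib, ← Finset.sum_mul]

/-- Rosenthal's inequality: for every `p ≥ 1` there is a universal constant `C_p` such that
for any finite family of independent nonnegative random variables `ξ_1, …, ξ_n` with finite
`p`-th moments, `E[(∑ ξ_i)^p] ≤ C_p · max((∑ E ξ_i)^p, ∑ E[ξ_i^p])`. -/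
theorem rosenthal_inequality (p : ℝ) (hp : 1 ≤ p) :
    ∃ C : ℝ, ∀ (Ω : Type) (_ : MeasurableSpace Ω) (μ : Measure Ω)
      (_ : IsProbabilityMeasure μ) (n : ℕ) (ξ : Fin n → Ω → ℝ),
      (∀ i, Measurable (ξ i)) →
      iIndepFun ξ μ →
      (∀ i ω, 0 ≤ ξ i ω) →
      (∀ i, Integrable (fun ω => ξ i ω ^ p) μ) →
      (∫ ω, (∑ i, ξ i ω) ^ p ∂μ) ≤
        C * max ((∑ i, ∫ ω, ξ i ω ∂μ) ^ p) (∑ i, ∫ ω, ξ i ω ^ p ∂μ) := by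
  have hp0 : (0:ℝ) < p := lt_of_lt_of_le one_pos hp
  set c : ℝ := 2 ^ (p - 1) with hc_def
  have hc0 : (0:ℝ) < c := Real.rpow_pos_of_pos two_pos _
  refine ⟨max (2 * c) ((4 * c) ^ p), ?_⟩
  intro Ω mΩ μ hμ n ξ hmeas hind hpos hint
  set S : Ω → ℝ := fun ω => ∑ i, ξ i ω with hS_def
  have hS_nonneg : ∀ ω, 0 ≤ S ω := fun ω => Finset.sum_nonneg fun i _ => hpos i ω
  set A : ℝ := ∫ ω, S ω ^ p ∂μ with hA_def
  set m : ℝ := ∑ i, ∫ ω, ξ i ω ∂μ with hm_def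
  set v : ℝ := ∑ i, ∫ ω, ξ i ω ^ p ∂μ with hv_def
  have hA0 : 0 ≤ A := integral_nonneg fun ω => Real.rpow_nonneg (hS_nonneg ω) p
  have hm0 : 0 ≤ m := Finset.sum_nonneg fun i _ => integral_nonneg fun ω => hpos i ω
  have hv0 : 0 ≤ v := Finset.sum_nonneg fun i _ =>
    integral_nonneg fun ω => Real.rpow_nonneg (hpos i ω) p
  have hC0 : (0:ℝ) < max (2 * c) ((4 * c) ^ p) :=
    lt_max_of_lt_left (by positivity)
  have hmax0 : 0 ≤ max (m ^ p) v := le_max_of_le_left (Real.rpow_nonneg hm0 p)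
  rcases hA0.eq_or_lt with hA | hA
  · rw [← hA]
    positivity
  -- scaling
  set t : ℝ := A ^ (1 / p) with ht_def
  have ht0 : 0 < t := Real.rpow_pos_of_pos hA _
  have htp : t ^ p = A := by
    rw [ht_def, ← Real.rpow_mul hA0, one_div_mul_cancel hp0.ne', Real.rpow_one]
  have key := rosenthal_key p hp Ω μ n (fun i ω => ξ i ω / t)
    (fun i => (hmeas i).div_const t)
    (by
      have := hind.comp (fun _ => fun x : ℝ => x / t) (fun _ => measurable_id.div_const t)
      exact this)
    (fun i ω => div_nonneg (hpos i ω) ht0.le)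
    (fun i => by
      have : (fun ω => (ξ i ω / t) ^ p) = fun ω => ξ i ω ^ p / t ^ p := by
        funext ω; rw [Real.div_rpow (hpos i ω) ht0.le]
      rw [this]
      exact (hint i).div_const _)
  -- rewrite the scaled quantities
  have e1 : (∫ ω, (∑ i, ξ i ω / t) ^ p ∂μ) = 1 := by
    have : (fun ω => (∑ i, ξ i ω / t) ^ p) = fun ω => S ω ^ p / A := by
      funext ω
      rw [← Finset.sum_div, Real.div_rpow (hS_nonneg ω) ht0.le, htp]
    rw [this, integral_div, ← hA_def, div_self hA.ne']
  have e2 : (∑ i, ∫ ω, ξ i ω / t ∂μ) = m / t := by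
    calc (∑ i, ∫ ω, ξ i ω / t ∂μ) = ∑ i, (∫ ω, ξ i ω ∂μ) / t :=
          Finset.sum_congr rfl fun i _ => integral_div t _
      _ = m / t := by rw [hm_def, Finset.sum_div]
  have e3 : (∑ i, ∫ ω, (ξ i ω / t) ^ p ∂μ) = v / A := by
    calc (∑ i, ∫ ω, (ξ i ω / t) ^ p ∂μ) = ∑ i, (∫ ω, ξ i ω ^ p ∂μ) / A := by
          refine Finset.sum_congr rfl fun i _ => ?_
          have h7 : (fun ω => (ξ i ω / t) ^ p) = fun ω => ξ i ω ^ p / t ^ p := by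
            funext ω; rw [Real.div_rpow (hpos i ω) ht0.le]
          rw [h7, integral_div, htp]
      _ = v / A := by rw [hv_def, Finset.sum_div]
  rw [e1, e2, e3] at key
  -- key : 1 ≤ c * (m / t * (1 + 1) + v / A)
  -- conclude
  have hfinal : A ≤ max (2 * c * v) ((4 * c) ^ p * m ^ p) := by
    by_contra h
    push_neg at h
    rw [max_lt_iff] at h
    obtain ⟨h1, h2⟩ := h
    have h2' : (4 * c * m) ^ p < A := by
      rwa [Real.mul_rpow (by positivity) hm0]
    have ht_gt : 4 * c * m < t := by
      have h6 := Real.rpow_lt_rpow (Real.rpow_nonneg (by positivity : (0:ℝ) ≤ 4 * c * m) p)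
        h2' (by positivity : (0:ℝ) < 1 / p)
      have heq : ((4 * c * m) ^ p) ^ (1 / p) = 4 * c * m := by
        rw [← Real.rpow_mul (by positivity), mul_one_div_cancel hp0.ne', Real.rpow_one]
      rw [heq] at h6
      exact h6
    have h3 : (2 * c * m) / t < 1 / 2 := (div_lt_iff₀ ht0).mpr (by linarith)
    have h4 : (c * v) / A < 1 / 2 := (div_lt_iff₀ hA).mpr (by linarith)
    have h5 : c * (m / t * (1 + 1) + v / A) = (2 * c * m) / t + (c * v) / A := by ring
    rw [h5] at key
    linarith
  calc A ≤ max (2 * c * v) ((4 * c) ^ p * m ^ p) := hfinal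
    _ ≤ max (2 * c) ((4 * c) ^ p) * max (m ^ p) v := by
        rcases max_cases (2 * c * v) ((4 * c) ^ p * m ^ p) with ⟨h, _⟩ | ⟨h, _⟩ <;> rw [h]
        · exact mul_le_mul (le_max_left _ _) (le_max_right _ _) hv0 hC0.le
        · exact mul_le_mul (le_max_right _ _) (le_max_left _ _)
            (Real.rpow_nonneg hm0 p) hC0.le
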